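/- Let D ⊂ ℝ² be a bounded measurable set of positive area with rotational symmetry of order N ≥ 3, and let T be an invertible 2×2 real matrix. Then (1/2)‖T^{-1}‖²_HS = [I(T D)/A(T D)³] / [I(D)/A(D)³], where A denotes area and I denotes moment of inertia about the centroid. -/

import Mathlib

open MeasureTheory Real Set

noncomputable section

/-- The 2×2 rotation matrix by angle `θ`. -/
def rot (θ : ℝ) : Matrix (Fin 2) (Fin 2) ℝ :=
  !![Real.cos θ, -Real.sin θ; Real.sin θ, Real.cos θ]

/-- Area of a plane region. -/
def area (D : Set (Fin 2 → ℝ)) : ℝ := (volume D).toReal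

/-- Centroid of a plane region. -/
def centroid (D : Set (Fin 2 → ℝ)) (j : Fin 2) : ℝ := (∫ x in D, x j) / area D

/-- Moment of inertia about the centroid. -/
def inertia (D : Set (Fin 2 → ℝ)) : ℝ :=
  ∫ x in D, ((x 0 - centroid D 0) ^ 2 + (x 1 - centroid D 1) ^ 2)

lemma integrableOn_cont {D : Set (Fin 2 → ℝ)} (hbdd : Bornology.IsBounded D)
    {g : (Fin 2 → ℝ) → ℝ} (hg : Continuous g) : IntegrableOn g D volume :=
  ((hg.continuousOn).integrableOn_compact hbdd.isCompact_closure).mono_set subset_closure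

lemma integral_lin2 {D : Set (Fin 2 → ℝ)} {f g : (Fin 2 → ℝ) → ℝ}
    (hf : IntegrableOn f D volume) (hg : IntegrableOn g D volume) (α β : ℝ) :
    ∫ x in D, (α * f x + β * g x) = α * (∫ x in D, f x) + β * ∫ x in D, g x := by
  rw [integral_add (hf.const_mul α) (hg.const_mul β), integral_const_mul, integral_const_mul]

lemma integral_lin3 {D : Set (Fin 2 → ℝ)} {f g h : (Fin 2 → ℝ) → ℝ}
    (hf : IntegrableOn f D volume) (hg : IntegrableOn g D volume)
    (hh : IntegrableOn h D volume) (α β γ : ℝ) :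
    ∫ x in D, (α * f x + β * g x + γ * h x)
      = α * (∫ x in D, f x) + β * (∫ x in D, g x) + γ * ∫ x in D, h x := by
  have h12 : IntegrableOn (fun x => α * f x + β * g x) D volume :=
    (hf.const_mul α).add (hg.const_mul β)
  rw [integral_add h12 (hh.const_mul γ), integral_lin2 hf hg, integral_const_mul]

lemma mulVec_apply2 (M : Matrix (Fin 2) (Fin 2) ℝ) (x : Fin 2 → ℝ) (i : Fin 2) :
    M.mulVec x i = M i 0 * x 0 + M i 1 * x 1 := by
  simp [Matrix.mulVec, dotProduct, Fin.sum_univ_two]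

lemma integral_image_mulVec (M : Matrix (Fin 2) (Fin 2) ℝ) (hM : IsUnit M.det)
    (D : Set (Fin 2 → ℝ)) (hmeas : MeasurableSet D) (g : (Fin 2 → ℝ) → ℝ) :
    ∫ y in (fun x => M.mulVec x) '' D, g y = |M.det| * ∫ x in D, g (M.mulVec x) := by
  have hL : ∀ x ∈ D, HasFDerivWithinAt (fun x => M.mulVec x)
      (LinearMap.toContinuousLinearMap (Matrix.mulVecLin M)) D x := fun x _ =>
    (LinearMap.toContinuousLinearMap (Matrix.mulVecLin M)).hasFDerivWithinAt
  have hinj : Set.InjOn (fun x => M.mulVec x) D :=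
    (Matrix.mulVec_injective_iff_isUnit.mpr ((Matrix.isUnit_iff_isUnit_det M).mpr hM)).injOn
  rw [integral_image_eq_integral_abs_det_fderiv_smul volume hmeas hL hinj g]
  have hdet : (LinearMap.toContinuousLinearMap (Matrix.mulVecLin M)).det = M.det := by
    simp [ContinuousLinearMap.det, ← Matrix.toLin'_apply', LinearMap.det_toLin']
  simp_rw [hdet, smul_eq_mul, integral_const_mul]

lemma volume_image_mulVec (M : Matrix (Fin 2) (Fin 2) ℝ) (D : Set (Fin 2 → ℝ)) :
    volume ((fun x => M.mulVec x) '' D) = ENNReal.ofReal |M.det| * volume D := by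
  have := MeasureTheory.Measure.addHaar_image_linearMap (volume : Measure (Fin 2 → ℝ))
    (Matrix.toLin' M) D
  rw [LinearMap.det_toLin'] at this
  exact this

set_option maxHeartbeats 1000000 in
/-- For a bounded measurable `D ⊂ ℝ²` of positive area with rotational symmetry of order
`N ≥ 3`, and an invertible 2×2 matrix `T`:
`(1/2)‖T⁻¹‖²_HS = [I/A³](T D) / [I/A³](D)`. -/
theorem hs_norm_as_inertia_ratio (N : ℕ) (hN : 3 ≤ N) (D : Set (Fin 2 → ℝ))
    (hmeas : MeasurableSet D) (hbdd : Bornology.IsBounded D) (hpos : 0 < volume D)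
    (hsym : (fun x => (rot (2 * Real.pi / (N : ℝ))).mulVec x) '' D = D)
    (T : Matrix (Fin 2) (Fin 2) ℝ) (hT : IsUnit T.det) :
    (1 / 2) * (∑ i : Fin 2, ∑ j : Fin 2, (T⁻¹ i j) ^ 2)
      = (inertia ((fun x => T.mulVec x) '' D) / area ((fun x => T.mulVec x) '' D) ^ 3)
          / (inertia D / area D ^ 3) := by
  set θ : ℝ := 2 * Real.pi / (N : ℝ) with hθdef
  set c : ℝ := Real.cos θ
  set s : ℝ := Real.sin θ
  have hNpos : (0:ℝ) < N := by positivity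
  have hθpos : 0 < θ := by positivity
  have hθlt : θ < π := by
    rw [hθdef, div_lt_iff₀ hNpos]
    have : (3:ℝ) ≤ N := by exact_mod_cast hN
    nlinarith [Real.pi_pos]
  have hs : 0 < s := Real.sin_pos_of_pos_of_lt_pi hθpos hθlt
  have pyth : s ^ 2 + c ^ 2 = 1 := Real.sin_sq_add_cos_sq θ
  have hc1 : c < 1 := by nlinarith
  -- basic integrability
  have i0 : IntegrableOn (fun x : Fin 2 → ℝ => x 0) D volume :=
    integrableOn_cont hbdd (continuous_apply 0)
  have i1 : IntegrableOn (fun x : Fin 2 → ℝ => x 1) D volume :=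
    integrableOn_cont hbdd (continuous_apply 1)
  have i00 : IntegrableOn (fun x : Fin 2 → ℝ => x 0 ^ 2) D volume :=
    integrableOn_cont hbdd ((continuous_apply 0).pow 2)
  have i11 : IntegrableOn (fun x : Fin 2 → ℝ => x 1 ^ 2) D volume :=
    integrableOn_cont hbdd ((continuous_apply 1).pow 2)
  have i01 : IntegrableOn (fun x : Fin 2 → ℝ => x 0 * x 1) D volume :=
    integrableOn_cont hbdd ((continuous_apply 0).mul (continuous_apply 1))
  set a : ℝ := ∫ x in D, x 0 with hadef
  set b : ℝ := ∫ x in D, x 1 with hbdef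
  set p : ℝ := ∫ x in D, x 0 ^ 2 with hpdef
  set q : ℝ := ∫ x in D, x 1 ^ 2 with hqdef
  set r : ℝ := ∫ x in D, x 0 * x 1 with hrdef
  have hdetrot : (rot θ).det = 1 := by
    rw [rot, Matrix.det_fin_two_of]; linear_combination pyth
  have hrotunit : IsUnit (rot θ).det := by rw [hdetrot]; exact isUnit_one
  have hsymInt : ∀ g : (Fin 2 → ℝ) → ℝ,
      ∫ x in D, g x = ∫ x in D, g ((rot θ).mulVec x) := by
    intro g
    conv_lhs => rw [← hsym]
    rw [integral_image_mulVec _ hrotunit _ hmeas, hdetrot, abs_one, one_mul]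
  have hrot00 : rot θ 0 0 = c := by simp [rot]; rfl
  have hrot01 : rot θ 0 1 = -s := by simp [rot]; rfl
  have hrot10 : rot θ 1 0 = s := by simp [rot]; rfl
  have hrot11 : rot θ 1 1 = c := by simp [rot]; rfl
  -- first moments vanish
  have e1 : a = c * a + (-s) * b := by
    have h := hsymInt (fun x => x 0)
    have h2 : ∀ x : Fin 2 → ℝ, (rot θ).mulVec x 0 = c * x 0 + (-s) * x 1 := by
      intro x; rw [mulVec_apply2, hrot00, hrot01]
    simp_rw [h2] at h
    exact h.trans (integral_lin2 i0 i1 c (-s))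
  have e2 : b = s * a + c * b := by
    have h := hsymInt (fun x => x 1)
    have h2 : ∀ x : Fin 2 → ℝ, (rot θ).mulVec x 1 = s * x 0 + c * x 1 := by
      intro x; rw [mulVec_apply2, hrot10, hrot11]
    simp_rw [h2] at h
    exact h.trans (integral_lin2 i0 i1 s c)
  have ha : a = 0 := by
    have key : ((1 - c) ^ 2 + s ^ 2) * a = 0 := by linear_combination (1 - c) * e1 - s * e2
    have hco : (0:ℝ) < (1 - c) ^ 2 + s ^ 2 := by positivity
    exact (mul_eq_zero.mp key).resolve_left (ne_of_gt hco)
  have hb : b = 0 := by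
    have key : (1 - c) * b = s * a := by linear_combination e2
    rw [ha, mul_zero] at key
    have : (1 - c) ≠ 0 := by nlinarith
    exact (mul_eq_zero.mp key).resolve_left this
  -- second moments: isotropy
  have e3 : p = c ^ 2 * p + s ^ 2 * q + (-(2 * c * s)) * r := by
    have h := hsymInt (fun x => x 0 ^ 2)
    have hptw : ∀ x : Fin 2 → ℝ, ((rot θ).mulVec x 0) ^ 2
        = c ^ 2 * (x 0 ^ 2) + s ^ 2 * (x 1 ^ 2) + (-(2 * c * s)) * (x 0 * x 1) := by
      intro x; rw [mulVec_apply2, hrot00, hrot01]; ring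
    simp_rw [hptw] at h
    exact h.trans (integral_lin3 i00 i11 i01 _ _ _)
  have e5 : r = (c * s) * p + (-(c * s)) * q + (c ^ 2 - s ^ 2) * r := by
    have h := hsymInt (fun x => x 0 * x 1)
    have hptw : ∀ x : Fin 2 → ℝ, ((rot θ).mulVec x 0) * ((rot θ).mulVec x 1)
        = (c * s) * (x 0 ^ 2) + (-(c * s)) * (x 1 ^ 2) + (c ^ 2 - s ^ 2) * (x 0 * x 1) := by
      intro x; rw [mulVec_apply2, mulVec_apply2, hrot00, hrot01, hrot10, hrot11]; ring
    simp_rw [hptw] at h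
    exact h.trans (integral_lin3 i00 i11 i01 _ _ _)
  have h3 : s ^ 2 * (p - q) + 2 * c * s * r = 0 := by linear_combination e3 + p * pyth
  have h5 : c * s * (p - q) - 2 * s ^ 2 * r = 0 := by linear_combination -e5 - r * pyth
  have hr : r = 0 := by
    have key : 2 * s * r = 0 := by linear_combination c * h3 - s * h5 - 2 * s * r * pyth
    have h2s : (2 : ℝ) * s ≠ 0 := by positivity
    exact (mul_eq_zero.mp key).resolve_left h2s
  have hpq : p = q := by
    have key : s ^ 2 * (p - q) = 0 := by linear_combination h3 - 2 * c * s * hr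
    have : p - q = 0 := (mul_eq_zero.mp key).resolve_left (by positivity)
    linarith
  -- areas
  have hfin : volume D ≠ ⊤ :=
    (lt_of_le_of_lt (measure_mono subset_closure) hbdd.isCompact_closure.measure_lt_top).ne
  have hA : 0 < area D := ENNReal.toReal_pos hpos.ne' hfin
  -- centroid of D is 0
  have hc0 : centroid D 0 = 0 := by rw [centroid, ← hadef, ha, zero_div]
  have hc1' : centroid D 1 = 0 := by rw [centroid, ← hbdef, hb, zero_div]
  -- inertia of D
  have hID : inertia D = p + q := by
    rw [inertia, hc0, hc1']
    simp_rw [sub_zero]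
    rw [integral_add i00 i11]
  -- p > 0
  have hp : 0 < p := by
    have hnn : 0 ≤ᵐ[volume.restrict D] fun x : Fin 2 → ℝ => x 0 ^ 2 + x 1 ^ 2 :=
      Filter.Eventually.of_forall fun x => by positivity
    have hint : IntegrableOn (fun x : Fin 2 → ℝ => x 0 ^ 2 + x 1 ^ 2) D volume := i00.add i11
    have hsup : 0 < volume (Function.support (fun x : Fin 2 → ℝ => x 0 ^ 2 + x 1 ^ 2) ∩ D) := by
      have hsub : D \ {0} ⊆ Function.support (fun x : Fin 2 → ℝ => x 0 ^ 2 + x 1 ^ 2) ∩ D := by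
        rintro x ⟨hxD, hx0⟩
        refine ⟨?_, hxD⟩
        simp only [Function.mem_support]
        intro hcontra
        apply hx0
        have h0 : x 0 = 0 := by nlinarith [sq_nonneg (x 0), sq_nonneg (x 1)]
        have h1 : x 1 = 0 := by nlinarith [sq_nonneg (x 0), sq_nonneg (x 1)]
        have : x = 0 := by
          funext i; fin_cases i <;> simpa [h0, h1]
        simpa [this]
      have hD0 : volume (D \ {0}) = volume D := by
        apply measure_diff_null
        exact measure_singleton 0
      calc 0 < volume D := hpos
        _ = volume (D \ {0}) := hD0.symm
        _ ≤ _ := measure_mono hsub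
    have := (setIntegral_pos_iff_support_of_nonneg_ae hnn hint).mpr hsup
    rw [integral_add i00 i11] at this
    have : 0 < p + q := this
    nlinarith [hpq]
  -- the image set
  set E : Set (Fin 2 → ℝ) := (fun x => T.mulVec x) '' D with hEdef
  set d : ℝ := T.det with hddef
  have hd : d ≠ 0 := hT.ne_zero
  have habs : 0 < |d| := abs_pos.mpr hd
  have hAE : area E = |d| * area D := by
    rw [area, hEdef, volume_image_mulVec, ENNReal.toReal_mul,
      ENNReal.toReal_ofReal (abs_nonneg _), ← hddef, area]
  -- centroid of E is 0
  have hcE : ∀ j : Fin 2, (∫ y in E, y j) = 0 := by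
    intro j
    rw [hEdef, integral_image_mulVec _ hT _ hmeas (fun y => y j)]
    simp_rw [mulVec_apply2]
    rw [integral_lin2 i0 i1, ← hadef, ← hbdef, ha, hb]
    ring
  have hcE0 : centroid E 0 = 0 := by rw [centroid, hcE 0, zero_div]
  have hcE1 : centroid E 1 = 0 := by rw [centroid, hcE 1, zero_div]
  -- inertia of E
  set K : ℝ := T 0 0 ^ 2 + T 0 1 ^ 2 + T 1 0 ^ 2 + T 1 1 ^ 2 with hKdef
  have hIE : inertia E = |d| * (K * p) := by
    rw [inertia, hcE0, hcE1]
    simp_rw [sub_zero]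
    rw [hEdef, integral_image_mulVec _ hT _ hmeas (fun y => y 0 ^ 2 + y 1 ^ 2)]
    have hptw : ∀ x : Fin 2 → ℝ, (T.mulVec x 0) ^ 2 + (T.mulVec x 1) ^ 2
        = (T 0 0 ^ 2 + T 1 0 ^ 2) * (x 0 ^ 2) + (T 0 1 ^ 2 + T 1 1 ^ 2) * (x 1 ^ 2)
          + (2 * (T 0 0 * T 0 1 + T 1 0 * T 1 1)) * (x 0 * x 1) := by
      intro x; rw [mulVec_apply2, mulVec_apply2]; ring
    simp_rw [hptw]
    rw [integral_lin3 i00 i11 i01, ← hpdef, ← hqdef, ← hrdef, hr, ← hpq, hKdef]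
    ring
  -- inverse matrix entries
  have hinv : ∑ i : Fin 2, ∑ j : Fin 2, (T⁻¹ i j) ^ 2 = K / d ^ 2 := by
    rw [Matrix.inv_def, Matrix.adjugate_fin_two, Ring.inverse_eq_inv]
    simp [Fin.sum_univ_two, Matrix.smul_apply, hKdef, ← hddef]
    field_simp
    ring
  -- final computation
  have hAne : area D ≠ 0 := ne_of_gt hA
  have hpne : p ≠ 0 := ne_of_gt hp
  rw [hinv, hIE, hAE, hID, ← hpq]
  rcases abs_cases d with ⟨h1, _⟩ | ⟨h1, _⟩ <;> rw [h1] <;> field_simp <;> ring
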